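/- In the secure summation model with K ≥ 2 users, assume each key Z_k takes values in (ZMod q)^{L_Z}, correctness holds, and security holds against the empty colluding set. Then for every user u ∈ {1,…,K}, H(Z_u) ≥ L·log q; consequently L_Z ≥ L (i.e., the individual key rate R_Z = L_Z/L is at least 1). -/

import Mathlib

open MeasureTheory ProbabilityTheory

/-- Shannon entropy (in natural log units) of a finitely-valued random variable. -/
noncomputable def entr {Ω : Type*} [MeasurableSpace Ω] (μ : Measure Ω)
    {α : Type*} [Fintype α] [MeasurableSpace α] (X : Ω → α) : ℝ :=
  ∑ a : α, Real.negMulLog ((μ.map X) {a}).toReal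

/-- Conditional Shannon entropy `H(X | Y)`. -/
noncomputable def condEntr {Ω : Type*} [MeasurableSpace Ω] (μ : Measure Ω)
    {α β : Type*} [Fintype α] [MeasurableSpace α] [Fintype β] [MeasurableSpace β]
    (X : Ω → α) (Y : Ω → β) : ℝ :=
  entr μ (fun ω => (X ω, Y ω)) - entr μ Y

/-- Conditional mutual information `I(X ; Y | Z)`. -/
noncomputable def condMI {Ω : Type*} [MeasurableSpace Ω] (μ : Measure Ω)
    {α β γ : Type*} [Fintype α] [MeasurableSpace α] [Fintype β] [MeasurableSpace β]
    [Fintype γ] [MeasurableSpace γ] (X : Ω → α) (Y : Ω → β) (Z : Ω → γ) : ℝ :=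
  condEntr μ X Z + condEntr μ Y Z - condEntr μ (fun ω => (X ω, Y ω)) Z

/-- A random variable is uniformly distributed on a finite type. -/
def IsUnif {Ω : Type*} [MeasurableSpace Ω] (μ : Measure Ω)
    {α : Type*} [Fintype α] [MeasurableSpace α] (X : Ω → α) : Prop :=
  ∀ a : α, μ (X ⁻¹' {a}) = (Fintype.card α : ENNReal)⁻¹


section Lib
open Real
variable {Ω : Type*} [MeasurableSpace Ω] {μ : Measure Ω} [IsProbabilityMeasure μ]
variable {α β γ : Type*} [Fintype α] [MeasurableSpace α] [MeasurableSingletonClass α]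
  [Fintype β] [MeasurableSpace β] [MeasurableSingletonClass β]
  [Fintype γ] [MeasurableSpace γ] [MeasurableSingletonClass γ]

lemma entr_eq {X : Ω → α} (hX : Measurable X) :
    entr μ X = ∑ a : α, Real.negMulLog (μ (X ⁻¹' {a})).toReal := by
  refine Finset.sum_congr rfl fun a _ => ?_
  rw [Measure.map_apply hX (measurableSet_singleton a)]

lemma sum_meas_preimage {X : Ω → α} (hX : Measurable X) :
    ∑ a : α, (μ (X ⁻¹' {a})).toReal = 1 := by
  rw [← ENNReal.toReal_sum (fun a _ => measure_ne_top μ _)]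
  rw [sum_measure_preimage_singleton _ (fun a _ => hX (measurableSet_singleton a))]
  simp

lemma meas_partition {X : Ω → α} (hX : Measurable X) {s : Set Ω} (hs : MeasurableSet s) :
    (μ s).toReal = ∑ a : α, (μ (X ⁻¹' {a} ∩ s)).toReal := by
  rw [← ENNReal.toReal_sum (fun a _ => measure_ne_top μ _)]
  congr 1
  have : ∀ a : α, μ (X ⁻¹' {a} ∩ s) = μ.restrict s (X ⁻¹' {a}) := fun a =>
    (Measure.restrict_apply (hX (measurableSet_singleton a))).symm
  simp_rw [this]
  rw [sum_measure_preimage_singleton _ (fun a _ => hX (measurableSet_singleton a))]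
  simp [Measure.restrict_apply_univ]

lemma entr_comp_inj {X : Ω → α} (hX : Measurable X) {g : α → β}
    (hg : Function.Injective g) :
    entr μ (fun ω => g (X ω)) = entr μ X := by
  classical
  have hgX : Measurable (fun ω => g (X ω)) := Measurable.of_discrete.comp hX
  rw [entr_eq hgX, entr_eq hX]
  have h0 : ∀ b ∈ Finset.univ, b ∉ Finset.univ.image g →
      Real.negMulLog (μ ((fun ω => g (X ω)) ⁻¹' {b})).toReal = 0 := by
    intro b _ hb
    have : (fun ω => g (X ω)) ⁻¹' {b} = ∅ := by
      ext ω; simp only [Set.mem_preimage, Set.mem_singleton_iff, Set.mem_empty_iff_false,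
        iff_false]
      intro h; exact hb (Finset.mem_image.2 ⟨X ω, Finset.mem_univ _, h⟩)
    simp [this, Real.negMulLog_zero]
  rw [← Finset.sum_subset (Finset.subset_univ (Finset.univ.image g)) h0,
    Finset.sum_image (fun a _ a' _ h => hg h)]
  refine Finset.sum_congr rfl fun a _ => ?_
  have : (fun ω => g (X ω)) ⁻¹' {g a} = X ⁻¹' {a} := by ext ω; simp [hg.eq_iff]
  rw [this]

lemma entr_const (c : α) : entr μ (fun _ : Ω => c) = 0 := by
  rw [entr_eq measurable_const]
  refine Finset.sum_eq_zero fun a _ => ?_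
  by_cases h : a = c
  · subst h
    have : (fun _ : Ω => a) ⁻¹' {a} = Set.univ := by ext; simp
    simp [this]
  · have : (fun _ : Ω => c) ⁻¹' {a} = ∅ := by ext; simp [Ne.symm h]
    simp [this, Real.negMulLog_zero]

lemma negMulLog_sum_le {ι : Type*} {s : Finset ι} {f : ι → ℝ} (hf : ∀ i ∈ s, 0 ≤ f i) :
    Real.negMulLog (∑ i ∈ s, f i) ≤ ∑ i ∈ s, Real.negMulLog (f i) := by
  have hp : 0 ≤ ∑ i ∈ s, f i := Finset.sum_nonneg hf
  have h1 : Real.negMulLog (∑ i ∈ s, f i)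
      = ∑ i ∈ s, f i * (- Real.log (∑ i ∈ s, f i)) := by
    rw [Real.negMulLog, ← Finset.sum_mul]; ring
  rw [h1]
  refine Finset.sum_le_sum fun i hi => ?_
  rcases eq_or_lt_of_le (hf i hi) with h | h
  · simp [← h, Real.negMulLog_zero]
  · have hle : f i ≤ ∑ j ∈ s, f j := Finset.single_le_sum hf hi
    rw [Real.negMulLog, neg_mul, ← mul_neg]
    exact mul_le_mul_of_nonneg_left (neg_le_neg (Real.log_le_log h hle)) (le_of_lt h)

lemma sum3_fuse {α β γ : Type*} [Fintype α] [Fintype β] [Fintype γ]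
    (F G H J : α → β → γ → ℝ) :
    (∑ a, ∑ b, ∑ c, F a b c) + (∑ a, ∑ b, ∑ c, G a b c) - (∑ a, ∑ b, ∑ c, H a b c)
      - (∑ a, ∑ b, ∑ c, J a b c)
    = ∑ a, ∑ b, ∑ c, (F a b c + G a b c - H a b c - J a b c) := by
  simp only [← Finset.sum_add_distrib, ← Finset.sum_sub_distrib]

lemma sum3_comm {α β γ : Type*} [Fintype α] [Fintype β] [Fintype γ]
    (F : α → β → γ → ℝ) :
    ∑ a, ∑ b, ∑ c, F a b c = ∑ c, ∑ a, ∑ b, F a b c := by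
  have h1 : ∀ a : α, ∑ b, ∑ c, F a b c = ∑ c : γ, ∑ b : β, F a b c :=
    fun a => Finset.sum_comm
  simp_rw [h1]
  exact Finset.sum_comm

lemma pair_preimage (A : Ω → α) (B : Ω → β) (a : α) (b : β) :
    (fun ω => (A ω, B ω)) ⁻¹' {(a, b)} = A ⁻¹' {a} ∩ B ⁻¹' {b} := by
  ext ω; simp [Prod.ext_iff]

lemma negMulLog_eq (x : ℝ) : Real.negMulLog x = x * (-Real.log x) := by
  rw [Real.negMulLog]; ring

lemma entr_pair_eq {A : Ω → α} {B : Ω → β} (hA : Measurable A) (hB : Measurable B) :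
    entr μ (fun ω => (A ω, B ω)) =
      ∑ a : α, ∑ b : β, Real.negMulLog (μ (A ⁻¹' {a} ∩ B ⁻¹' {b})).toReal := by
  rw [entr_eq (hA.prodMk hB), Fintype.sum_prod_type]
  exact Finset.sum_congr rfl fun a _ => Finset.sum_congr rfl fun b _ => by
    rw [pair_preimage]

lemma entr_pair_left_le {A : Ω → α} {B : Ω → β} (hA : Measurable A) (hB : Measurable B) :
    entr μ B ≤ entr μ (fun ω => (A ω, B ω)) := by
  rw [entr_pair_eq hA hB, entr_eq hB, Finset.sum_comm]
  refine Finset.sum_le_sum fun b _ => ?_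
  rw [meas_partition hA (hB (measurableSet_singleton b))]
  exact negMulLog_sum_le fun a _ => ENNReal.toReal_nonneg

lemma sum3_rot {α β γ : Type*} [Fintype α] [Fintype β] [Fintype γ]
    (F : α → β → γ → ℝ) :
    ∑ a, ∑ b, ∑ c, F a b c = ∑ b, ∑ c, ∑ a, F a b c := by
  calc ∑ a, ∑ b, ∑ c, F a b c = ∑ b, ∑ a, ∑ c, F a b c := Finset.sum_comm
    _ = ∑ b, ∑ c, ∑ a, F a b c := Finset.sum_congr rfl fun b _ => Finset.sum_comm

lemma gibbs_term {x u v w : ℝ} (hx : 0 ≤ x) (hxu : x ≤ u) (hxv : x ≤ v) (huw : u ≤ w) :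
    x * (Real.log u + Real.log v - Real.log x - Real.log w)
      ≤ (if w = 0 then 0 else u * v / w) - x := by
  rcases eq_or_lt_of_le hx with h0 | hxpos
  · rw [← h0, zero_mul, sub_zero]
    split
    · exact le_refl 0
    · have hu : 0 ≤ u := le_trans hx hxu
      have hv : 0 ≤ v := le_trans hx hxv
      have hw : 0 ≤ w := le_trans hu huw
      exact div_nonneg (mul_nonneg hu hv) hw
  · have hu : 0 < u := lt_of_lt_of_le hxpos hxu
    have hv : 0 < v := lt_of_lt_of_le hxpos hxv
    have hw : 0 < w := lt_of_lt_of_le hu huw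
    have hxne : x ≠ 0 := ne_of_gt hxpos
    have hwne : w ≠ 0 := ne_of_gt hw
    rw [if_neg hwne]
    have hlog : Real.log u + Real.log v - Real.log x - Real.log w
        = Real.log ((u * v) / (x * w)) := by
      rw [Real.log_div (by positivity) (by positivity),
        Real.log_mul (ne_of_gt hu) (ne_of_gt hv), Real.log_mul hxne hwne]
      ring
    rw [hlog]
    have hb := Real.log_le_sub_one_of_pos (show 0 < u * v / (x * w) by positivity)
    calc x * Real.log (u * v / (x * w)) ≤ x * (u * v / (x * w) - 1) :=
        mul_le_mul_of_nonneg_left hb hx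
      _ = u * v / w - x := by field_simp

/-- The Gibbs-type core inequality for conditional mutual information. -/
lemma core_ineq {α β γ : Type*} [Fintype α] [Fintype β] [Fintype γ]
    (r : α → β → γ → ℝ) (hr0 : ∀ a b c, 0 ≤ r a b c) :
    (∑ a, ∑ b, ∑ c, Real.negMulLog (r a b c))
      + (∑ c, Real.negMulLog (∑ a, ∑ b, r a b c))
    ≤ (∑ a, ∑ c, Real.negMulLog (∑ b, r a b c))
      + (∑ b, ∑ c, Real.negMulLog (∑ a, r a b c)) := by
  classical
  have S1 : (∑ a, ∑ c, Real.negMulLog (∑ b, r a b c))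
      = ∑ a, ∑ b, ∑ c, r a b c * (-Real.log (∑ b', r a b' c)) := by
    refine Finset.sum_congr rfl fun a _ => ?_
    rw [show (∑ b, ∑ c, r a b c * (-Real.log (∑ b', r a b' c)))
        = ∑ c, ∑ b, r a b c * (-Real.log (∑ b', r a b' c)) from Finset.sum_comm]
    refine Finset.sum_congr rfl fun c _ => ?_
    rw [negMulLog_eq, Finset.sum_mul]
  have S2 : (∑ b, ∑ c, Real.negMulLog (∑ a, r a b c))
      = ∑ a, ∑ b, ∑ c, r a b c * (-Real.log (∑ a', r a' b c)) := by
    rw [sum3_rot (fun a b c => r a b c * (-Real.log (∑ a', r a' b c)))]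
    refine Finset.sum_congr rfl fun b _ => Finset.sum_congr rfl fun c _ => ?_
    rw [negMulLog_eq, Finset.sum_mul]
  have S3 : (∑ c, Real.negMulLog (∑ a, ∑ b, r a b c))
      = ∑ a, ∑ b, ∑ c, r a b c * (-Real.log (∑ a', ∑ b', r a' b' c)) := by
    rw [sum3_comm (fun a b c => r a b c * (-Real.log (∑ a', ∑ b', r a' b' c)))]
    refine Finset.sum_congr rfl fun c _ => ?_
    rw [negMulLog_eq, Finset.sum_mul]
    refine Finset.sum_congr rfl fun a _ => ?_
    rw [Finset.sum_mul]
  have key : ∀ a b c, r a b c * (Real.log (∑ b', r a b' c) + Real.log (∑ a', r a' b c)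
        - Real.log (r a b c) - Real.log (∑ a', ∑ b', r a' b' c))
      ≤ (if (∑ a', ∑ b', r a' b' c) = 0 then 0
          else (∑ b', r a b' c) * (∑ a', r a' b c) / (∑ a', ∑ b', r a' b' c))
        - r a b c := by
    intro a b c
    refine gibbs_term (hr0 a b c) ?_ ?_ ?_
    · exact Finset.single_le_sum (fun b' _ => hr0 a b' c) (Finset.mem_univ b)
    · exact Finset.single_le_sum (fun a' _ => hr0 a' b c) (Finset.mem_univ a)
    · exact Finset.single_le_sum
        (f := fun a' => ∑ b', r a' b' c)
        (fun a' _ => Finset.sum_nonneg fun b' _ => hr0 a' b' c) (Finset.mem_univ a)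
  have hsum_h : (∑ a, ∑ b, ∑ c, (if (∑ a', ∑ b', r a' b' c) = 0 then (0:ℝ)
        else (∑ b', r a b' c) * (∑ a', r a' b c) / (∑ a', ∑ b', r a' b' c)))
      = ∑ c, ∑ a, ∑ b, r a b c := by
    rw [sum3_comm (fun a b c => (if (∑ a', ∑ b', r a' b' c) = 0 then (0:ℝ)
        else (∑ b', r a b' c) * (∑ a', r a' b c) / (∑ a', ∑ b', r a' b' c)))]
    refine Finset.sum_congr rfl fun c _ => ?_
    by_cases hc : (∑ a', ∑ b', r a' b' c) = 0
    · simp only [if_pos hc, Finset.sum_const_zero]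
      exact hc.symm
    · simp only [if_neg hc]
      refine Eq.trans (Finset.sum_congr rfl fun a _ => ?_) rfl
      rw [← Finset.sum_div, ← Finset.mul_sum,
        show (∑ b, ∑ a', r a' b c) = ∑ a', ∑ b', r a' b' c from Finset.sum_comm,
        mul_div_assoc, div_self hc, mul_one]
  have hsum_r : (∑ a, ∑ b, ∑ c, r a b c) = ∑ c, ∑ a, ∑ b, r a b c := sum3_comm r
  have hTle : (∑ a, ∑ b, ∑ c, (r a b c * (Real.log (∑ b', r a b' c)
      + Real.log (∑ a', r a' b c) - Real.log (r a b c)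
      - Real.log (∑ a', ∑ b', r a' b' c)))) ≤ 0 := by
    calc (∑ a, ∑ b, ∑ c, (r a b c * (Real.log (∑ b', r a b' c)
        + Real.log (∑ a', r a' b c) - Real.log (r a b c)
        - Real.log (∑ a', ∑ b', r a' b' c))))
        ≤ ∑ a, ∑ b, ∑ c, ((if (∑ a', ∑ b', r a' b' c) = 0 then (0:ℝ)
            else (∑ b', r a b' c) * (∑ a', r a' b c) / (∑ a', ∑ b', r a' b' c))
          - r a b c) :=
          Finset.sum_le_sum fun a _ => Finset.sum_le_sum fun b _ =>
            Finset.sum_le_sum fun c _ => key a b c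
      _ = (∑ a, ∑ b, ∑ c, (if (∑ a', ∑ b', r a' b' c) = 0 then (0:ℝ)
            else (∑ b', r a b' c) * (∑ a', r a' b c) / (∑ a', ∑ b', r a' b' c)))
          - ∑ a, ∑ b, ∑ c, r a b c := by
          simp only [Finset.sum_sub_distrib]
      _ = 0 := by rw [hsum_h, hsum_r, sub_self]
  have hfuse := sum3_fuse
    (fun a b c => r a b c * (-Real.log (∑ b', r a b' c)))
    (fun a b c => r a b c * (-Real.log (∑ a', r a' b c)))
    (fun a b c => Real.negMulLog (r a b c))
    (fun a b c => r a b c * (-Real.log (∑ a', ∑ b', r a' b' c)))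
  have hterm : ∀ a b c, r a b c * (-Real.log (∑ b', r a b' c))
      + r a b c * (-Real.log (∑ a', r a' b c)) - Real.negMulLog (r a b c)
      - r a b c * (-Real.log (∑ a', ∑ b', r a' b' c))
      = -(r a b c * (Real.log (∑ b', r a b' c) + Real.log (∑ a', r a' b c)
        - Real.log (r a b c) - Real.log (∑ a', ∑ b', r a' b' c))) := by
    intro a b c; rw [Real.negMulLog]; ring
  have h5 : 0 ≤ (∑ a, ∑ b, ∑ c, r a b c * (-Real.log (∑ b', r a b' c)))
      + (∑ a, ∑ b, ∑ c, r a b c * (-Real.log (∑ a', r a' b c)))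
      - (∑ a, ∑ b, ∑ c, Real.negMulLog (r a b c))
      - (∑ a, ∑ b, ∑ c, r a b c * (-Real.log (∑ a', ∑ b', r a' b' c))) := by
    rw [hfuse]
    simp only [hterm, Finset.sum_neg_distrib]
    exact neg_nonneg.2 hTle
  rw [S1, S2, S3]
  linarith [h5]

/-- The (real-valued) joint probability mass function of a triple. -/
noncomputable def jointp (μ : Measure Ω) (X : Ω → α) (Y : Ω → β) (Z : Ω → γ) :
    α → β → γ → ℝ :=
  fun a b c => (μ (X ⁻¹' {a} ∩ Y ⁻¹' {b} ∩ Z ⁻¹' {c})).toReal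

set_option maxHeartbeats 1000000 in
lemma condMI_nonneg {X : Ω → α} {Y : Ω → β} {Z : Ω → γ}
    (hX : Measurable X) (hY : Measurable Y) (hZ : Measurable Z) :
    0 ≤ condMI μ X Y Z := by
  have hr0 : ∀ a b c, 0 ≤ jointp μ X Y Z a b c := fun a b c => ENNReal.toReal_nonneg
  have E1 : entr μ (fun ω => (X ω, Z ω))
      = ∑ a, ∑ c, Real.negMulLog (∑ b, jointp μ X Y Z a b c) := by
    rw [entr_pair_eq hX hZ]
    refine Finset.sum_congr rfl fun a _ => Finset.sum_congr rfl fun c _ => ?_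
    congr 1
    rw [meas_partition hY ((hX (measurableSet_singleton a)).inter
      (hZ (measurableSet_singleton c)))]
    refine Finset.sum_congr rfl fun b _ => ?_
    rw [show Y ⁻¹' {b} ∩ (X ⁻¹' {a} ∩ Z ⁻¹' {c}) = X ⁻¹' {a} ∩ Y ⁻¹' {b} ∩ Z ⁻¹' {c}
      from by ext ω; simp only [Set.mem_inter_iff, Set.mem_preimage,
        Set.mem_singleton_iff]; tauto]
    rfl
  have E2 : entr μ (fun ω => (Y ω, Z ω))
      = ∑ b, ∑ c, Real.negMulLog (∑ a, jointp μ X Y Z a b c) := by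
    rw [entr_pair_eq hY hZ]
    refine Finset.sum_congr rfl fun b _ => Finset.sum_congr rfl fun c _ => ?_
    congr 1
    rw [meas_partition hX ((hY (measurableSet_singleton b)).inter
      (hZ (measurableSet_singleton c)))]
    refine Finset.sum_congr rfl fun a _ => ?_
    rw [show X ⁻¹' {a} ∩ (Y ⁻¹' {b} ∩ Z ⁻¹' {c}) = X ⁻¹' {a} ∩ Y ⁻¹' {b} ∩ Z ⁻¹' {c}
      from (Set.inter_assoc _ _ _).symm]
    rfl
  have E3 : entr μ (fun ω => ((X ω, Y ω), Z ω))
      = ∑ a, ∑ b, ∑ c, Real.negMulLog (jointp μ X Y Z a b c) := by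
    rw [entr_pair_eq (hX.prodMk hY) hZ, Fintype.sum_prod_type]
    refine Finset.sum_congr rfl fun a _ => Finset.sum_congr rfl fun b _ =>
      Finset.sum_congr rfl fun c _ => ?_
    rw [show (fun ω => (X ω, Y ω)) ⁻¹' {(a, b)} ∩ Z ⁻¹' {c}
      = X ⁻¹' {a} ∩ Y ⁻¹' {b} ∩ Z ⁻¹' {c} by rw [pair_preimage X Y a b]]
    rfl
  have E4 : entr μ Z = ∑ c, Real.negMulLog (∑ a, ∑ b, jointp μ X Y Z a b c) := by
    rw [entr_eq hZ]
    refine Finset.sum_congr rfl fun c _ => ?_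
    congr 1
    rw [meas_partition (hX.prodMk hY) (hZ (measurableSet_singleton c)),
      Fintype.sum_prod_type]
    refine Finset.sum_congr rfl fun a _ => Finset.sum_congr rfl fun b _ => ?_
    rw [show (fun ω => (X ω, Y ω)) ⁻¹' {(a, b)} ∩ Z ⁻¹' {c}
      = X ⁻¹' {a} ∩ Y ⁻¹' {b} ∩ Z ⁻¹' {c} by rw [pair_preimage X Y a b]]
    rfl
  have hc := core_ineq (jointp μ X Y Z) hr0
  unfold condMI condEntr
  rw [E1, E2, E3, E4]
  linarith [hc]

variable {δ : Type*} [Fintype δ] [MeasurableSpace δ] [MeasurableSingletonClass δ]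

lemma meas_comp {T : Ω → α} (hT : Measurable T) (g : α → β) :
    Measurable (fun ω => g (T ω)) :=
  Measurable.of_discrete.comp hT

lemma entr_pair_swap {A : Ω → α} {B : Ω → β} (hA : Measurable A) (hB : Measurable B) :
    entr μ (fun ω => (A ω, B ω)) = entr μ (fun ω => (B ω, A ω)) :=
  entr_comp_inj (hB.prodMk hA) (g := fun p : β × α => (p.2, p.1))
    (fun x y h => by
      simp only [Prod.mk.injEq] at h; exact Prod.ext h.2 h.1)

lemma entr_pair_assoc {A : Ω → α} {B : Ω → β} {C : Ω → γ}
    (hA : Measurable A) (hB : Measurable B) (hC : Measurable C) :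
    entr μ (fun ω => ((A ω, B ω), C ω)) = entr μ (fun ω => (A ω, (B ω, C ω))) :=
  entr_comp_inj (hA.prodMk (hB.prodMk hC))
    (g := fun p : α × (β × γ) => ((p.1, p.2.1), p.2.2))
    (fun x y h => by
      simp only [Prod.mk.injEq] at h
      exact Prod.ext h.1.1 (Prod.ext h.1.2 h.2))

lemma entr_pair_right_le {A : Ω → α} {B : Ω → β} (hA : Measurable A) (hB : Measurable B) :
    entr μ A ≤ entr μ (fun ω => (A ω, B ω)) := by
  rw [entr_pair_swap hA hB]; exact entr_pair_left_le hB hA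

lemma condEntr_nonneg {A : Ω → α} {B : Ω → β} (hA : Measurable A) (hB : Measurable B) :
    0 ≤ condEntr μ A B :=
  sub_nonneg.2 (entr_pair_left_le hA hB)

lemma condEntr_comp_right_inj {A : Ω → α} {B : Ω → β} (hA : Measurable A)
    (hB : Measurable B) {g : β → γ} (hg : Function.Injective g) :
    condEntr μ A (fun ω => g (B ω)) = condEntr μ A B := by
  unfold condEntr
  rw [show entr μ (fun ω => (A ω, g (B ω))) = entr μ (fun ω => (A ω, B ω)) from
      entr_comp_inj (hA.prodMk hB) (g := fun p : α × β => (p.1, g p.2))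
        (fun x y h => by
          simp only [Prod.mk.injEq] at h; exact Prod.ext h.1 (hg h.2)),
    show entr μ (fun ω => g (B ω)) = entr μ B from entr_comp_inj hB hg]

lemma condMI_sub {A : Ω → α} {B : Ω → β} {C : Ω → γ}
    (hA : Measurable A) (hB : Measurable B) (hC : Measurable C) :
    condMI μ A B C = condEntr μ A C - condEntr μ A (fun ω => (B ω, C ω)) := by
  unfold condMI condEntr
  rw [entr_pair_assoc hA hB hC]
  ring

lemma condMI_comm {A : Ω → α} {B : Ω → β} {C : Ω → γ}
    (hA : Measurable A) (hB : Measurable B) (hC : Measurable C) :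
    condMI μ A B C = condMI μ B A C := by
  unfold condMI condEntr
  rw [show entr μ (fun ω => ((A ω, B ω), C ω)) = entr μ (fun ω => ((B ω, A ω), C ω)) from
    entr_comp_inj ((hB.prodMk hA).prodMk hC)
      (g := fun p : (β × α) × γ => ((p.1.2, p.1.1), p.2))
      (fun x y h => by
        simp only [Prod.mk.injEq] at h
        exact Prod.ext (Prod.ext h.1.2 h.1.1) h.2)]
  ring

lemma condEntr_pair_right_le {A : Ω → α} {B : Ω → β} {C : Ω → γ}
    (hA : Measurable A) (hB : Measurable B) (hC : Measurable C) :
    condEntr μ A (fun ω => (B ω, C ω)) ≤ condEntr μ A C := by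
  have h := condMI_nonneg (μ := μ) hA hB hC
  rw [condMI_sub hA hB hC] at h
  linarith

lemma condEntr_le_comp_right {A : Ω → α} {B : Ω → β} (hA : Measurable A)
    (hB : Measurable B) (g : β → γ) :
    condEntr μ A B ≤ condEntr μ A (fun ω => g (B ω)) := by
  have h1 : condEntr μ A (fun ω => (B ω, g (B ω))) = condEntr μ A B :=
    condEntr_comp_right_inj hA hB (g := fun b => (b, g b))
      (fun x y h => congrArg Prod.fst h)
  rw [← h1]
  exact condEntr_pair_right_le hA hB (meas_comp hB g)

lemma condEntr_le_entr {A : Ω → α} {B : Ω → β} (hA : Measurable A) (hB : Measurable B) :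
    condEntr μ A B ≤ entr μ A := by
  calc condEntr μ A B ≤ condEntr μ A (fun _ => ()) :=
      condEntr_le_comp_right hA hB (fun _ => ())
    _ = entr μ A := by
      unfold condEntr
      rw [show entr μ (fun ω => (A ω, ())) = entr μ A from
        entr_comp_inj hA (g := fun a => (a, ())) (fun x y h => congrArg Prod.fst h),
        entr_const (), sub_zero]

lemma condEntr_comp_left_zero {B : Ω → β} (hB : Measurable B) (g : β → α) :
    condEntr μ (fun ω => g (B ω)) B = 0 := by
  unfold condEntr
  rw [show entr μ (fun ω => (g (B ω), B ω)) = entr μ B from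
    entr_comp_inj hB (g := fun b => (g b, b)) (fun x y h => congrArg Prod.snd h), sub_self]

lemma condMI_comp_left_le {A : Ω → α} {B : Ω → β} {C : Ω → γ}
    (hA : Measurable A) (hB : Measurable B) (hC : Measurable C) (g : α → δ) :
    condMI μ (fun ω => g (A ω)) B C ≤ condMI μ A B C := by
  rw [condMI_comm (meas_comp hA g) hB hC, condMI_comm hA hB hC,
    condMI_sub hB (meas_comp hA g) hC, condMI_sub hB hA hC]
  have h : condEntr μ B (fun ω => (A ω, C ω)) ≤ condEntr μ B (fun ω => (g (A ω), C ω)) :=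
    condEntr_le_comp_right hB (hA.prodMk hC) (fun p : α × γ => (g p.1, p.2))
  linarith

lemma condMI_comp_right_le {A : Ω → α} {B : Ω → β} {C : Ω → γ}
    (hA : Measurable A) (hB : Measurable B) (hC : Measurable C) (g : β → δ) :
    condMI μ A (fun ω => g (B ω)) C ≤ condMI μ A B C := by
  rw [condMI_comm hA (meas_comp hB g) hC, condMI_comm hA hB hC]
  exact condMI_comp_left_le hB hA hC g

lemma condMI_comp_cond_inj {A : Ω → α} {B : Ω → β} {C : Ω → γ}
    (hA : Measurable A) (hB : Measurable B) (hC : Measurable C)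
    {g : γ → δ} (hg : Function.Injective g) :
    condMI μ A B (fun ω => g (C ω)) = condMI μ A B C := by
  unfold condMI
  rw [condEntr_comp_right_inj hA hC hg, condEntr_comp_right_inj hB hC hg,
    condEntr_comp_right_inj (hA.prodMk hB) hC hg]

lemma condEntr_le_pair_left {A : Ω → α} {B : Ω → β} {C : Ω → γ}
    (hA : Measurable A) (hB : Measurable B) (hC : Measurable C) :
    condEntr μ A C ≤ condEntr μ (fun ω => (A ω, B ω)) C := by
  unfold condEntr
  have h1 : entr μ (fun ω => ((A ω, B ω), C ω)) = entr μ (fun ω => (B ω, (A ω, C ω))) :=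
    entr_comp_inj (hB.prodMk (hA.prodMk hC))
      (g := fun p : β × (α × γ) => ((p.2.1, p.1), p.2.2))
      (fun x y h => by
        simp only [Prod.mk.injEq] at h
        exact Prod.ext h.1.2 (Prod.ext h.1.1 h.2))
  rw [h1]
  have h2 := entr_pair_left_le (μ := μ) hB (hA.prodMk hC)
  linarith

lemma condEntr_pair_split {A : Ω → α} {B : Ω → β} {C : Ω → γ}
    (hA : Measurable A) (hB : Measurable B) (hC : Measurable C) :
    condEntr μ (fun ω => (A ω, B ω)) C
      = condEntr μ A (fun ω => (B ω, C ω)) + condEntr μ B C := by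
  unfold condEntr
  rw [entr_pair_assoc hA hB hC]
  ring

lemma negMulLog_le_aux {p N : ℝ} (hp : 0 ≤ p) (hN : 0 < N) :
    Real.negMulLog p ≤ p * Real.log N + (N⁻¹ - p) := by
  rcases eq_or_lt_of_le hp with h0 | hppos
  · rw [← h0]
    simp [Real.negMulLog_zero]
    positivity
  · have h1 : Real.negMulLog p = p * Real.log N + p * (-Real.log (N * p)) := by
      rw [Real.negMulLog, Real.log_mul (ne_of_gt hN) (ne_of_gt hppos)]
      ring
    rw [h1]
    have h2 : -Real.log (N * p) ≤ (N * p)⁻¹ - 1 := by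
      have := Real.log_le_sub_one_of_pos (show 0 < (N * p)⁻¹ by positivity)
      rw [Real.log_inv] at this
      linarith
    have h3 : p * (-Real.log (N * p)) ≤ p * ((N * p)⁻¹ - 1) :=
      mul_le_mul_of_nonneg_left h2 hp
    have h4 : p * ((N * p)⁻¹ - 1) = N⁻¹ - p := by
      field_simp
    linarith

lemma entr_le_log_card {X : Ω → α} (hX : Measurable X) :
    entr μ X ≤ Real.log (Fintype.card α) := by
  rcases isEmpty_or_nonempty α with hα | hα
  · rw [entr_eq hX]
    simp [Finset.univ_eq_empty]
  · have hN : (0:ℝ) < (Fintype.card α : ℝ) := by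
      exact_mod_cast Fintype.card_pos
    rw [entr_eq hX]
    calc ∑ a : α, Real.negMulLog (μ (X ⁻¹' {a})).toReal
        ≤ ∑ a : α, ((μ (X ⁻¹' {a})).toReal * Real.log (Fintype.card α)
          + (((Fintype.card α : ℝ))⁻¹ - (μ (X ⁻¹' {a})).toReal)) :=
          Finset.sum_le_sum fun a _ => negMulLog_le_aux ENNReal.toReal_nonneg hN
      _ = (∑ a : α, (μ (X ⁻¹' {a})).toReal) * Real.log (Fintype.card α)
          + ((Fintype.card α : ℝ) * ((Fintype.card α : ℝ))⁻¹
            - ∑ a : α, (μ (X ⁻¹' {a})).toReal) := by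
          rw [Finset.sum_add_distrib, ← Finset.sum_mul, Finset.sum_sub_distrib,
            Finset.sum_const, Finset.card_univ, nsmul_eq_mul]
      _ = Real.log (Fintype.card α) := by
          rw [sum_meas_preimage hX, one_mul, mul_inv_cancel₀ (ne_of_gt hN)]
          ring

lemma entr_unif {X : Ω → α} (hX : Measurable X) (hu : IsUnif μ X) :
    entr μ X = Real.log (Fintype.card α) := by
  rcases isEmpty_or_nonempty α with hα | hα
  · rw [entr_eq hX]
    simp [Finset.univ_eq_empty]
  · have hN : (0:ℝ) < (Fintype.card α : ℝ) := by exact_mod_cast Fintype.card_pos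
    rw [entr_eq hX]
    have hpt : ∀ a : α, (μ (X ⁻¹' {a})).toReal = ((Fintype.card α : ℝ))⁻¹ := by
      intro a
      rw [hu a, ENNReal.toReal_inv]
      simp
    simp_rw [hpt]
    rw [Finset.sum_const, Finset.card_univ, nsmul_eq_mul, Real.negMulLog,
      Real.log_inv]
    field_simp

lemma entr_pair_eq_add {A : Ω → α} {B : Ω → β} (hA : Measurable A) (hB : Measurable B)
    (hfac : ∀ a b, μ (A ⁻¹' {a} ∩ B ⁻¹' {b}) = μ (A ⁻¹' {a}) * μ (B ⁻¹' {b})) :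
    entr μ (fun ω => (A ω, B ω)) = entr μ A + entr μ B := by
  rw [entr_pair_eq hA hB, entr_eq hA, entr_eq hB]
  simp_rw [hfac, ENNReal.toReal_mul, Real.negMulLog_mul]
  have h1 : ∀ a : α, ∑ b : β, ((μ (B ⁻¹' {b})).toReal
        * Real.negMulLog ((μ (A ⁻¹' {a})).toReal)
      + (μ (A ⁻¹' {a})).toReal * Real.negMulLog ((μ (B ⁻¹' {b})).toReal))
      = Real.negMulLog ((μ (A ⁻¹' {a})).toReal)
        + (μ (A ⁻¹' {a})).toReal * ∑ b : β, Real.negMulLog ((μ (B ⁻¹' {b})).toReal) := by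
    intro a
    rw [Finset.sum_add_distrib, ← Finset.sum_mul, sum_meas_preimage hB, one_mul,
      ← Finset.mul_sum]
  simp_rw [h1]
  rw [Finset.sum_add_distrib, ← Finset.sum_mul, sum_meas_preimage hA, one_mul]

lemma condEntr_of_indep {A : Ω → α} {B : Ω → β} (hA : Measurable A) (hB : Measurable B)
    (hfac : ∀ a b, μ (A ⁻¹' {a} ∩ B ⁻¹' {b}) = μ (A ⁻¹' {a}) * μ (B ⁻¹' {b})) :
    condEntr μ A B = entr μ A := by
  unfold condEntr
  rw [entr_pair_eq_add hA hB hfac]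
  ring


lemma condEntr_eq_zero_of_comp {B : Ω → β} (hB : Measurable B) (g : β → α)
    {A : Ω → α} (hA : ∀ ω, A ω = g (B ω)) : condEntr μ A B = 0 := by
  have h : A = fun ω => g (B ω) := funext hA
  rw [h]
  exact condEntr_comp_left_zero hB g

lemma condEntr_le_of_comp {A : Ω → α} {B : Ω → β} {C : Ω → γ} (hA : Measurable A)
    (hB : Measurable B) (g : β → γ) (hC : ∀ ω, C ω = g (B ω)) :
    condEntr μ A B ≤ condEntr μ A C := by
  have h : C = fun ω => g (B ω) := funext hC
  rw [h]
  exact condEntr_le_comp_right hA hB g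

lemma meas_partition_ennreal {X : Ω → α} (hX : Measurable X) {s : Set Ω}
    (hs : MeasurableSet s) :
    μ s = ∑ a : α, μ (X ⁻¹' {a} ∩ s) := by
  have h : ∀ a : α, μ (X ⁻¹' {a} ∩ s) = μ.restrict s (X ⁻¹' {a}) := fun a =>
    (Measure.restrict_apply (hX (measurableSet_singleton a))).symm
  simp_rw [h]
  rw [sum_measure_preimage_singleton _ (fun a _ => hX (measurableSet_singleton a))]
  simp [Measure.restrict_apply_univ]

lemma sum_meas_preimage_ennreal {X : Ω → α} (hX : Measurable X) :
    ∑ a : α, μ (X ⁻¹' {a}) = 1 := by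
  rw [sum_measure_preimage_singleton _ (fun a _ => hX (measurableSet_singleton a))]
  simp

end Lib

set_option maxHeartbeats 2000000 in
/-- in the secure summation model where each key `Z_k` takes values in
`(ZMod q)^{L_Z}`, with correctness and security against the empty colluding set, every
user's key satisfies `H(Z_u) ≥ L·log q`; consequently `L_Z ≥ L` (key rate `R_Z ≥ 1`). -/
theorem stmt5
    (q K L LX LZ : ℕ) [NeZero q] (hq : IsPrimePow q) (hK : 2 ≤ K) (hL : 1 ≤ L)
    (hLX : 1 ≤ LX) (hLZ : 1 ≤ LZ)
    {Ω : Type*} [MeasurableSpace Ω] (μ : Measure Ω) [IsProbabilityMeasure μ]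
    (W : Fin K → Ω → (Fin L → ZMod q))
    (Z : Fin K → Ω → (Fin LZ → ZMod q))
    (X : Fin K → Ω → (Fin LX → ZMod q))
    (hWmeas : ∀ k, Measurable (W k)) (hZmeas : ∀ k, Measurable (Z k))
    (hWunif : ∀ k, IsUnif μ (W k))
    (hWindep : iIndepFun W μ)
    (hWZindep : IndepFun (fun ω => fun k => W k ω) (fun ω => fun k => Z k ω) μ)
    (f : Fin K → (Fin L → ZMod q) → (Fin LZ → ZMod q) → (Fin LX → ZMod q))
    (hX : ∀ k, X k = fun ω => f k (W k ω) (Z k ω))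
    (hXmeas : ∀ k, Measurable (X k))
    (hCorrect : condEntr μ (fun ω => ∑ k, W k ω) (fun ω => fun k => X k ω) = 0)
    (hSecEmpty : condMI μ (fun ω => fun k => W k ω) (fun ω => fun k => X k ω)
      (fun ω => (∑ k, W k ω,
        fun k : {k : Fin K // k ∈ (∅ : Finset (Fin K))} => (W k.1 ω, Z k.1 ω))) = 0) :
    (∀ u : Fin K, entr μ (Z u) ≥ L * Real.log q) ∧ L ≤ LZ := by

  classical
  have hq2 : 2 ≤ q := hq.two_le
  have hlogq : (0:ℝ) < Real.log q := Real.log_pos (by exact_mod_cast hq2)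
  have hLq : Real.log (Fintype.card (Fin L → ZMod q)) = L * Real.log q := by
    rw [show Fintype.card (Fin L → ZMod q) = q ^ L by
      rw [Fintype.card_fun, ZMod.card, Fintype.card_fin]]
    push_cast
    rw [Real.log_pow]
  -- basic random vectors
  set Wv : Ω → (Fin K → (Fin L → ZMod q)) := fun ω => fun k => W k ω with hWv
  set Zv : Ω → (Fin K → (Fin LZ → ZMod q)) := fun ω => fun k => Z k ω with hZv
  set Xv : Ω → (Fin K → (Fin LX → ZMod q)) := fun ω => fun k => X k ω with hXv
  set S : Ω → (Fin L → ZMod q) := fun ω => ∑ k, W k ω with hS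
  have mWv : Measurable Wv := measurable_pi_lambda _ fun k => hWmeas k
  have mZv : Measurable Zv := measurable_pi_lambda _ fun k => hZmeas k
  have mXv : Measurable Xv := measurable_pi_lambda _ fun k => hXmeas k
  have mS : Measurable S := meas_comp mWv (fun v => ∑ k, v k)
  -- splitting of the sum
  have hsplit : ∀ (j : Fin K) (ω : Ω),
      S ω = W j ω + ∑ k : {k : Fin K // k ≠ j}, W k.1 ω := by
    intro j ω
    show ∑ k, W k ω = W j ω + ∑ k : {k : Fin K // k ≠ j}, W k.1 ω
    rw [← Finset.add_sum_erase Finset.univ (fun k => W k ω) (Finset.mem_univ j)]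
    congr 1
    exact Finset.sum_subtype (Finset.univ.erase j)
      (fun k => by simp [Finset.mem_erase]) (fun k => W k ω)
  -- product formula for the joint law of W
  have hprod : ∀ (j : Fin K) (a : Fin L → ZMod q)
      (w : {k : Fin K // k ≠ j} → (Fin L → ZMod q)),
      μ (Wv ⁻¹' {fun k => if h : k = j then a else w ⟨k, h⟩})
        = μ (W j ⁻¹' {a}) * ∏ k : {k : Fin K // k ≠ j}, μ (W k.1 ⁻¹' {w k}) := by
    intro j a w
    have hset : Wv ⁻¹' {fun k => if h : k = j then a else w ⟨k, h⟩}
        = ⋂ k ∈ Finset.univ, W k ⁻¹' {if h : k = j then a else w ⟨k, h⟩} := by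
      ext ω
      simp [hWv, funext_iff]
    rw [hset, hWindep.measure_inter_preimage_eq_mul Finset.univ
      (fun k _ => measurableSet_singleton _)]
    rw [← Finset.mul_prod_erase Finset.univ _ (Finset.mem_univ j)]
    congr 1
    · rw [show (if h : j = j then a else w ⟨j, h⟩) = a from dif_pos rfl]
    · rw [Finset.prod_subtype (p := fun k => k ≠ j) (Finset.univ.erase j)
        (fun k => by simp [Finset.mem_erase])
        (fun k => μ (W k ⁻¹' {if h : k = j then a else w ⟨k, h⟩}))]
      refine Finset.prod_congr rfl fun k _ => ?_
      rw [show (if h : (k : Fin K) = j then a else w ⟨k, h⟩) = w k from dif_neg k.2]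
  -- the key independence fact : W j is independent of (W_{-j}, Z)
  have hfac : ∀ (j : Fin K) (a : Fin L → ZMod q)
      (w : {k : Fin K // k ≠ j} → (Fin L → ZMod q))
      (z : Fin K → (Fin LZ → ZMod q)),
      μ (W j ⁻¹' {a} ∩ (fun ω =>
          ((fun k : {k : Fin K // k ≠ j} => W k.1 ω), Zv ω)) ⁻¹' {(w, z)})
        = μ (W j ⁻¹' {a}) * μ ((fun ω =>
          ((fun k : {k : Fin K // k ≠ j} => W k.1 ω), Zv ω)) ⁻¹' {(w, z)}) := by
    intro j a w z
    set Wsub : Ω → ({k : Fin K // k ≠ j} → (Fin L → ZMod q)) :=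
      fun ω => fun k => W k.1 ω with hWsub
    have mWsub : Measurable Wsub := measurable_pi_lambda _ fun k => hWmeas k.1
    have hpre : (fun ω => (Wsub ω, Zv ω)) ⁻¹' {(w, z)}
        = Wsub ⁻¹' {w} ∩ Zv ⁻¹' {z} := pair_preimage Wsub Zv w z
    have hI1 : ∀ a' : Fin L → ZMod q, W j ⁻¹' {a'} ∩ Wsub ⁻¹' {w}
        = Wv ⁻¹' {fun k => if h : k = j then a' else w ⟨k, h⟩} := by
      intro a'
      ext ω
      simp only [Set.mem_inter_iff, Set.mem_preimage, Set.mem_singleton_iff,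
        funext_iff, hWsub, hWv]
      constructor
      · rintro ⟨h1, h2⟩ k
        by_cases hk : k = j
        · subst hk; rw [dif_pos rfl]; exact h1
        · rw [dif_neg hk]; exact h2 ⟨k, hk⟩
      · intro hAll
        refine ⟨?_, fun k => ?_⟩
        · have := hAll j; rwa [dif_pos rfl] at this
        · have := hAll k.1; rwa [dif_neg k.2] at this
    have hstep : ∀ a' : Fin L → ZMod q,
        μ (W j ⁻¹' {a'} ∩ (Wsub ⁻¹' {w} ∩ Zv ⁻¹' {z}))
        = μ (W j ⁻¹' {a'})
          * ((∏ k : {k : Fin K // k ≠ j}, μ (W k.1 ⁻¹' {w k})) * μ (Zv ⁻¹' {z})) := by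
      intro a'
      rw [← Set.inter_assoc, hI1 a',
        hWZindep.measure_inter_preimage_eq_mul _ _ (measurableSet_singleton _)
          (measurableSet_singleton _),
        hprod j a' w, mul_assoc]
    have hR : μ (Wsub ⁻¹' {w} ∩ Zv ⁻¹' {z})
        = (∏ k : {k : Fin K // k ≠ j}, μ (W k.1 ⁻¹' {w k})) * μ (Zv ⁻¹' {z}) := by
      rw [meas_partition_ennreal (hWmeas j)
        ((mWsub (measurableSet_singleton w)).inter (mZv (measurableSet_singleton z)))]
      simp_rw [hstep]
      rw [← Finset.sum_mul, sum_meas_preimage_ennreal (hWmeas j), one_mul]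
    rw [hpre, hR, ← Set.inter_assoc, hI1 a,
      hWZindep.measure_inter_preimage_eq_mul _ _ (measurableSet_singleton _)
        (measurableSet_singleton _),
      hprod j a w, mul_assoc]
  -- conditional entropy of W j given (W_{-j}, Z) equals its entropy
  have hWjC : ∀ j : Fin K, condEntr μ (W j)
      (fun ω => ((fun k : {k : Fin K // k ≠ j} => W k.1 ω), Zv ω))
      = L * Real.log q := by
    intro j
    have mC : Measurable (fun ω => ((fun k : {k : Fin K // k ≠ j} => W k.1 ω), Zv ω)) :=
      (measurable_pi_lambda _ fun (k : {k : Fin K // k ≠ j}) => hWmeas k.1).prodMk mZv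
    rw [condEntr_of_indep (hWmeas j) mC (fun a c => by
      rcases c with ⟨w, z⟩
      exact hfac j a w z)]
    rw [entr_unif (hWmeas j) (hWunif j), hLq]
  -- MAIN PER-USER BOUND
  have hmain : ∀ u : Fin K, entr μ (Z u) ≥ L * Real.log q := by
    intro u
    have hcard : 1 < Fintype.card (Fin K) := by rw [Fintype.card_fin]; omega
    obtain ⟨j, hj⟩ := Fintype.exists_ne_of_one_lt_card hcard u
    -- abbreviations for conditioners
    set Cj : Ω → (({k : Fin K // k ≠ j} → (Fin L → ZMod q))
        × (Fin K → (Fin LZ → ZMod q))) :=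
      fun ω => ((fun k : {k : Fin K // k ≠ j} => W k.1 ω), Zv ω) with hCj
    set Cu : Ω → (({k : Fin K // k ≠ u} → (Fin L → ZMod q))
        × (Fin K → (Fin LZ → ZMod q))) :=
      fun ω => ((fun k : {k : Fin K // k ≠ u} => W k.1 ω), Zv ω) with hCu
    set C2 : Ω → (({k : Fin K // k ≠ u} → (Fin L → ZMod q))
        × ({k : Fin K // k ≠ u} → (Fin LZ → ZMod q))) :=
      fun ω => ((fun k : {k : Fin K // k ≠ u} => W k.1 ω),
        (fun k : {k : Fin K // k ≠ u} => Z k.1 ω)) with hC2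
    have mCj : Measurable Cj :=
      (measurable_pi_lambda _ fun (k : {k : Fin K // k ≠ j}) => hWmeas k.1).prodMk mZv
    have mCu : Measurable Cu :=
      (measurable_pi_lambda _ fun (k : {k : Fin K // k ≠ u}) => hWmeas k.1).prodMk mZv
    have mC2 : Measurable C2 :=
      (measurable_pi_lambda _ fun (k : {k : Fin K // k ≠ u}) => hWmeas k.1).prodMk
        (measurable_pi_lambda _ fun (k : {k : Fin K // k ≠ u}) => hZmeas k.1)
    -- Step A : condEntr (X u) (W u) ≤ entr (Z u)
    have stepA : condEntr μ (X u) (W u) ≤ entr μ (Z u) := by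
      have t1 : condEntr μ (X u) (W u)
          ≤ condEntr μ (fun ω => (X u ω, Z u ω)) (W u) :=
        condEntr_le_pair_left (μ := μ) (hXmeas u) (hZmeas u) (hWmeas u)
      have t2 : condEntr μ (fun ω => (X u ω, Z u ω)) (W u)
          = condEntr μ (X u) (fun ω => (Z u ω, W u ω)) + condEntr μ (Z u) (W u) :=
        condEntr_pair_split (μ := μ) (hXmeas u) (hZmeas u) (hWmeas u)
      have t3 : condEntr μ (X u) (fun ω => (Z u ω, W u ω)) = 0 := by
        rw [hX u]
        exact condEntr_comp_left_zero (μ := μ) ((hZmeas u).prodMk (hWmeas u))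
          (fun p => f u p.2 p.1)
      have t4 : condEntr μ (Z u) (W u) ≤ entr μ (Z u) :=
        condEntr_le_entr (μ := μ) (hZmeas u) (hWmeas u)
      linarith
    -- Step BC : condEntr (X u) S ≤ condEntr (X u) (W u)
    have hMI0 : condMI μ (X u) (W u) S = 0 := by
      refine le_antisymm ?_ (condMI_nonneg (μ := μ) (hXmeas u) (hWmeas u) mS)
      have e1 : condMI μ (X u) (W u) S ≤ condMI μ Xv (W u) S :=
        condMI_comp_left_le (μ := μ) mXv (hWmeas u) mS (fun v => v u)
      have e2 : condMI μ Xv (W u) S ≤ condMI μ Xv Wv S :=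
        condMI_comp_right_le (μ := μ) mXv mWv mS (fun v => v u)
      have e3 : condMI μ Xv Wv S = condMI μ Wv Xv S :=
        condMI_comm (μ := μ) mXv mWv mS
      have hT0 : IsEmpty {k : Fin K // k ∈ (∅ : Finset (Fin K))} :=
        ⟨fun k => Finset.notMem_empty k.1 k.2⟩
      have e4 : condMI μ Wv Xv (fun ω => (S ω,
          (fun k : {k : Fin K // k ∈ (∅ : Finset (Fin K))} =>
            ((W k.1 ω, Z k.1 ω) : (Fin L → ZMod q) × (Fin LZ → ZMod q)))))
          = condMI μ Wv Xv S := by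
        have hjunk : (fun ω => (S ω,
            (fun k : {k : Fin K // k ∈ (∅ : Finset (Fin K))} =>
              ((W k.1 ω, Z k.1 ω) : (Fin L → ZMod q) × (Fin LZ → ZMod q)))))
            = fun ω => ((fun s : Fin L → ZMod q =>
                (s, (fun k : {k : Fin K // k ∈ (∅ : Finset (Fin K))} =>
                (hT0.elim k : (Fin L → ZMod q) × (Fin LZ → ZMod q))))) (S ω)) := by
          funext ω
          refine Prod.ext rfl ?_
          funext k
          exact hT0.elim k
        rw [hjunk]
        exact condMI_comp_cond_inj (μ := μ) mWv mXv mS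
          (g := fun s : Fin L → ZMod q =>
            (s, (fun k : {k : Fin K // k ∈ (∅ : Finset (Fin K))} =>
            (hT0.elim k : (Fin L → ZMod q) × (Fin LZ → ZMod q)))))
          (fun x y h => congrArg Prod.fst h)
      have e5 : condMI μ Wv Xv S = 0 := by
        rw [← e4]
        exact hSecEmpty
      linarith
    have stepBC : condEntr μ (X u) S ≤ condEntr μ (X u) (W u) := by
      have b1 := condMI_sub (μ := μ) (hXmeas u) (hWmeas u) mS
      rw [hMI0] at b1
      have b2 : condEntr μ (X u) (fun ω => (W u ω, S ω))
          = condEntr μ (X u) (fun ω => (S ω, W u ω)) :=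
        condEntr_comp_right_inj (μ := μ) (hXmeas u) (mS.prodMk (hWmeas u))
          (g := Prod.swap) Prod.swap_injective
      have b3 : condEntr μ (X u) (fun ω => (S ω, W u ω)) ≤ condEntr μ (X u) (W u) :=
        condEntr_pair_right_le (μ := μ) (hXmeas u) mS (hWmeas u)
      linarith
    -- Step D : entr (X u) ≤ condEntr (X u) S
    have stepD : entr μ (X u) ≤ condEntr μ (X u) S := by
      have d1 : entr μ (fun ω => (X u ω, S ω)) = entr μ (fun ω => (S ω, X u ω)) :=
        entr_pair_swap (μ := μ) (hXmeas u) mS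
      have d2 : condEntr μ S Cj ≤ condEntr μ S (X u) := by
        rw [hX u]
        exact condEntr_le_comp_right (μ := μ) mS mCj
          (fun c => f u (c.1 ⟨u, Ne.symm hj⟩) (c.2 u))
      have d3a : condEntr μ S Cj = condEntr μ (W j) Cj := by
        have hfun : (fun ω => (S ω, Cj ω))
            = fun ω => ((fun p : (Fin L → ZMod q)
                × (({k : Fin K // k ≠ j} → (Fin L → ZMod q))
                  × (Fin K → (Fin LZ → ZMod q))) =>
                (p.1 + ∑ k : {k : Fin K // k ≠ j}, p.2.1 k, p.2)) ((W j ω, Cj ω))) := by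
          funext ω
          refine Prod.ext ?_ rfl
          exact hsplit j ω
        have hinj : Function.Injective (fun p : (Fin L → ZMod q)
            × (({k : Fin K // k ≠ j} → (Fin L → ZMod q))
              × (Fin K → (Fin LZ → ZMod q))) =>
            (p.1 + ∑ k : {k : Fin K // k ≠ j}, p.2.1 k, p.2)) := by
          intro x y h
          simp only [Prod.mk.injEq] at h
          obtain ⟨h1, h2⟩ := h
          rw [h2] at h1
          exact Prod.ext (add_right_cancel h1) h2
        have heq : entr μ (fun ω => (S ω, Cj ω)) = entr μ (fun ω => (W j ω, Cj ω)) := by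
          rw [hfun]
          exact entr_comp_inj ((hWmeas j).prodMk mCj) hinj
        unfold condEntr
        rw [heq]
      have d3b : condEntr μ (W j) Cj = L * Real.log q := hWjC j
      have d4 : entr μ S ≤ L * Real.log q := by
        rw [← hLq]
        exact entr_le_log_card (μ := μ) mS
      have d0 : condEntr μ (X u) S - entr μ (X u) = condEntr μ S (X u) - entr μ S := by
        unfold condEntr
        rw [d1]
        ring
      linarith
    -- Step E : L log q ≤ entr (X u)
    have stepE : (L : ℝ) * Real.log q ≤ entr μ (X u) := by
      have e1 : condEntr μ (X u) C2 ≤ entr μ (X u) :=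
        condEntr_le_entr (μ := μ) (hXmeas u) mC2
      have e2 : condMI μ (X u) (W u) C2 ≤ condEntr μ (X u) C2 := by
        have h := condMI_sub (μ := μ) (hXmeas u) (hWmeas u) mC2
        have h2 := condEntr_nonneg (μ := μ) (hXmeas u) ((hWmeas u).prodMk mC2)
        linarith
      have e3 : condMI μ (X u) (W u) C2
          = condEntr μ (W u) C2 - condEntr μ (W u) (fun ω => (X u ω, C2 ω)) := by
        rw [condMI_comm (μ := μ) (hXmeas u) (hWmeas u) mC2,
          condMI_sub (μ := μ) (hWmeas u) (hXmeas u) mC2]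
      have e4 : condEntr μ (W u) C2 = L * Real.log q := by
        refine le_antisymm ?_ ?_
        · calc condEntr μ (W u) C2 ≤ entr μ (W u) :=
            condEntr_le_entr (μ := μ) (hWmeas u) mC2
          _ = L * Real.log q := by rw [entr_unif (hWmeas u) (hWunif u), hLq]
        · have h1 : condEntr μ (W u) Cu ≤ condEntr μ (W u) C2 :=
            condEntr_le_of_comp (μ := μ) (hWmeas u) mCu
              (fun c => (c.1, fun k : {k : Fin K // k ≠ u} => c.2 k.1))
              (fun ω => rfl)
          have h2 : condEntr μ (W u) Cu = L * Real.log q := hWjC u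
          linarith
      have e5 : condEntr μ (W u) (fun ω => (X u ω, C2 ω)) = 0 := by
        refine le_antisymm ?_ (condEntr_nonneg (μ := μ) (hWmeas u)
          ((hXmeas u).prodMk mC2))
        have mD : Measurable (fun ω => (X u ω, C2 ω)) := (hXmeas u).prodMk mC2
        have f1 : condEntr μ (W u) (fun ω => (X u ω, C2 ω))
            ≤ condEntr μ (fun ω => (W u ω, S ω)) (fun ω => (X u ω, C2 ω)) :=
          condEntr_le_pair_left (μ := μ) (hWmeas u) mS mD
        have f2 : condEntr μ (fun ω => (W u ω, S ω)) (fun ω => (X u ω, C2 ω))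
            = condEntr μ (W u) (fun ω => (S ω, (X u ω, C2 ω)))
              + condEntr μ S (fun ω => (X u ω, C2 ω)) :=
          condEntr_pair_split (μ := μ) (hWmeas u) mS mD
        have f3 : condEntr μ (W u) (fun ω => (S ω, (X u ω, C2 ω))) = 0 := by
          refine condEntr_eq_zero_of_comp (μ := μ) (mS.prodMk mD)
            (fun p : (Fin L → ZMod q)
                × ((Fin LX → ZMod q)
                  × (({k : Fin K // k ≠ u} → (Fin L → ZMod q))
                    × ({k : Fin K // k ≠ u} → (Fin LZ → ZMod q)))) =>
              p.1 - ∑ k : {k : Fin K // k ≠ u}, p.2.2.1 k) (fun ω => ?_)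
          show W u ω = S ω - ∑ k : {k : Fin K // k ≠ u}, W k.1 ω
          rw [hsplit u ω]
          exact (add_sub_cancel_right _ _).symm
        have f4 : condEntr μ S (fun ω => (X u ω, C2 ω)) ≤ condEntr μ S Xv := by
          refine condEntr_le_of_comp (μ := μ) mS mD
            (fun p : (Fin LX → ZMod q)
                × (({k : Fin K // k ≠ u} → (Fin L → ZMod q))
                  × ({k : Fin K // k ≠ u} → (Fin LZ → ZMod q))) =>
              (fun k : Fin K => if h : k = u then p.1
                else f k (p.2.1 ⟨k, h⟩) (p.2.2 ⟨k, h⟩))) (fun ω => ?_)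
          funext k
          show X k ω = if h : k = u then X u ω else f k (W k ω) (Z k ω)
          by_cases hk : k = u
          · subst hk; rw [dif_pos rfl]
          · rw [dif_neg hk, hX k]
        have f5 : condEntr μ S Xv = 0 := hCorrect
        linarith
      linarith
    linarith
  refine ⟨hmain, ?_⟩
  -- consequence : L ≤ LZ
  have u0 : Fin K := ⟨0, by omega⟩
  have h1 : (L : ℝ) * Real.log q ≤ entr μ (Z u0) := hmain u0
  have h2 : entr μ (Z u0) ≤ (LZ : ℝ) * Real.log q := by
    have := entr_le_log_card (μ := μ) (hZmeas u0)
    rwa [show Real.log (Fintype.card (Fin LZ → ZMod q)) = LZ * Real.log q by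
      rw [show Fintype.card (Fin LZ → ZMod q) = q ^ LZ by
        rw [Fintype.card_fun, ZMod.card, Fintype.card_fin]]
      push_cast
      rw [Real.log_pow]] at this
  have h3 : (L : ℝ) ≤ (LZ : ℝ) :=
    le_of_mul_le_mul_right (le_trans h1 h2) hlogq
  exact_mod_cast h3
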